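/- Let ψ be a monic polynomial with integer coefficients and let m be an integer with m > 1. Then there exist Laurent polynomials φ₁, φ₂ ∈ ℤ[t, t⁻¹] and a nonzero integer n such that m·φ₁(t) + ψ(t)·φ₂(t) + tⁿ = 1 in the ring ℤ[t, t⁻¹] of integer Laurent polynomials. -/

import Mathlib

open LaurentPolynomial

theorem stmt8 (ψ : Polynomial ℤ) (hψ : ψ.Monic) (m : ℤ) (hm : 1 < m) :
    ∃ (φ₁ φ₂ : LaurentPolynomial ℤ) (n : ℤ), n ≠ 0 ∧
      (m : LaurentPolynomial ℤ) * φ₁ + ψ.toLaurent * φ₂ + LaurentPolynomial.T n = 1 := by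
  set N := m.toNat with hNdef
  have hmN : (N : ℤ) = m := Int.toNat_of_nonneg (by omega)
  haveI : NeZero N := ⟨by omega⟩
  let f : ℤ →+* ZMod N := Int.castRingHom (ZMod N)
  let ψ' := ψ.map f
  have hψ' : ψ'.Monic := hψ.map f
  haveI : Module.Finite (ZMod N) (AdjoinRoot ψ') :=
    Module.Finite.of_basis (AdjoinRoot.powerBasis' hψ').basis
  haveI : Finite (AdjoinRoot ψ') := Module.finite_of_finite (ZMod N)
  obtain ⟨a, b, hab, hpow⟩ : ∃ a b : ℕ, a ≠ b ∧
      (AdjoinRoot.root ψ') ^ a = (AdjoinRoot.root ψ') ^ b :=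
    Finite.exists_ne_map_eq_of_infinite (fun k : ℕ => (AdjoinRoot.root ψ') ^ k)
  -- wlog a < b
  obtain ⟨i, j, hij, hpow⟩ : ∃ i j : ℕ, i < j ∧
      (AdjoinRoot.root ψ') ^ i = (AdjoinRoot.root ψ') ^ j := by
    rcases lt_or_gt_of_ne hab with h | h
    · exact ⟨a, b, h, hpow⟩
    · exact ⟨b, a, h, hpow.symm⟩
  have hdvd : ψ' ∣ Polynomial.X ^ j - Polynomial.X ^ i := by
    have : AdjoinRoot.mk ψ' (Polynomial.X ^ j - Polynomial.X ^ i) = 0 := by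
      rw [map_sub, map_pow, map_pow, AdjoinRoot.mk_X, ← hpow, sub_self]
    exact (AdjoinRoot.mk_eq_zero).1 this
  obtain ⟨q', hq'⟩ := hdvd
  obtain ⟨q, hq⟩ := Polynomial.map_surjective f (ZMod.intCast_surjective (n := N)) q'
  set p : Polynomial ℤ := Polynomial.X ^ j - Polynomial.X ^ i - ψ * q with hpdef
  have hp0 : p.map f = 0 := by
    simp only [hpdef, Polynomial.map_sub, Polynomial.map_mul, Polynomial.map_pow,
      Polynomial.map_X, hq, ← hq']
    exact sub_eq_zero.mpr hq'
  have hCdvd : Polynomial.C m ∣ p := by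
    rw [Polynomial.C_dvd_iff_dvd_coeff]
    intro k
    have : (p.coeff k : ZMod N) = 0 := by
      have := congrArg (fun g => Polynomial.coeff g k) hp0
      simpa [f] using this
    have := (ZMod.intCast_zmod_eq_zero_iff_dvd _ _).1 this
    rwa [hmN] at this
  obtain ⟨r, hr⟩ := hCdvd
  -- key identity in ℤ[X]:  X^j - X^i = ψ * q + C m * r
  have key : (Polynomial.X : Polynomial ℤ) ^ j - Polynomial.X ^ i
      = ψ * q + Polynomial.C m * r := by
    have : p = Polynomial.C m * r := hr
    rw [hpdef] at this
    linear_combination this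
  refine ⟨-(T (-(i : ℤ)) * r.toLaurent), -(T (-(i : ℤ)) * q.toLaurent),
    (j : ℤ) - (i : ℤ), by omega, ?_⟩
  have hkey := congrArg Polynomial.toLaurent key
  simp only [map_sub, map_add, map_mul, Polynomial.toLaurent_X_pow,
    Polynomial.toLaurent_C] at hkey
  have hCm : (LaurentPolynomial.C m : LaurentPolynomial ℤ) = (m : LaurentPolynomial ℤ) :=
    eq_intCast (LaurentPolynomial.C : ℤ →+* LaurentPolynomial ℤ) m
  have hTmul : ∀ x y : ℤ, (T x : LaurentPolynomial ℤ) * T y = T (x + y) := fun x y => (T_add x y).symm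
  calc (m : LaurentPolynomial ℤ) * -(T (-(i : ℤ)) * r.toLaurent)
        + ψ.toLaurent * -(T (-(i : ℤ)) * q.toLaurent) + T ((j : ℤ) - (i : ℤ))
      = -(T (-(i : ℤ)) * (ψ.toLaurent * q.toLaurent + LaurentPolynomial.C m * r.toLaurent))
        + T ((j : ℤ) - (i : ℤ)) := by rw [hCm]; ring
    _ = -(T (-(i : ℤ)) * (T (j : ℤ) - T (i : ℤ))) + T ((j : ℤ) - (i : ℤ)) := by rw [← hkey]
    _ = 1 := by
        rw [mul_sub, hTmul, hTmul]
        rw [show -(i : ℤ) + (j : ℤ) = (j : ℤ) - (i : ℤ) by ring,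
          show -(i : ℤ) + (i : ℤ) = 0 by ring, T_zero]
        ring
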